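/- P2 one-step transition probabilities: let V and D be as below and let G_2 = {G^k_2}_{k=1}^L be a P2-style planner, where G^k_2(z, x) is a probability distribution over k-element subsets of {1,...,L}. In P2 planner-guided sampling, if the state after step k is x_k (which has exactly k unmasked coordinates), then for any y ∈ V^L with exactly k+1 unmasked coordinates the one-step transition probability from x_k to y equals ( Π_{i ∈ C(y)} Cat( y^i; D^i(x_k) ) ) · F^{k+1}(x_k, y), where C(y) = { i : y^i ≠ m } and F^{k+1}(x, y) = E_{z ~ D(x)}[ Cat( C(y); G^{k+1}_2(z^{-y}, x) ) ], with z^{-y} denoting z with z^i replaced by y^i for every i ∈ C(y). -/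
import Mathlib


open Finset

/-- `C(y)`: the set of unmasked coordinates of `y`. -/
def unmaskedSet {V : Type*} [Fintype V] [DecidableEq V] {L : ℕ}
    (mask : V) (y : Fin L → V) : Finset (Fin L) :=
  Finset.univ.filter (fun i : Fin L => y i ≠ mask)

/-- The sequence keeping the coordinates of `z` on `S` and masking all others. -/
def maskedWith {V : Type*} {L : ℕ} [DecidableEq (Fin L)]
    (mask : V) (z : Fin L → V) (S : Finset (Fin L)) : Fin L → V :=
  fun i => if i ∈ S then z i else mask

/-- `z^{-y}`: the sequence `z` with `z^i` replaced by `y^i` for every `i ∈ C(y)`. -/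
def mergeOn {V : Type*} [DecidableEq V] {L : ℕ}
    (mask : V) (z y : Fin L → V) : Fin L → V :=
  fun i => if y i ≠ mask then y i else z i

/-- `F^{k}(x, y) = E_{z ~ D(x)}[ Cat(C(y); G₂^{k}(z^{-y}, x)) ]`, the coordinates of
`z` being sampled independently, `z^j ~ D^j(x)`. -/
noncomputable def FP2 {V : Type*} [Fintype V] [DecidableEq V] {L : ℕ}
    (D : (Fin L → V) → Fin L → V → ℝ)
    (G2 : ℕ → (Fin L → V) → (Fin L → V) → Finset (Fin L) → ℝ)
    (mask : V) (k : ℕ) (x y : Fin L → V) : ℝ :=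
  ∑ z : Fin L → V, (∏ j, D x j (z j)) * G2 k (mergeOn mask z y) x (unmaskedSet mask y)

/-- One step of P2 planner-guided sampling after step `k`: from state `x`, sample
`z ~ D(x)` coordinatewise independently, sample a `(k+1)`-element subset
`I ~ G₂^{k+1}(z, x)`, and move to the state whose coordinates on `I` are those of `z`
and which is masked elsewhere.  `p2Kernel D G2 mask k x w` is the probability of
moving from `x` to `w`. -/
noncomputable def p2Kernel {V : Type*} [Fintype V] [DecidableEq V] {L : ℕ}
    (D : (Fin L → V) → Fin L → V → ℝ)
    (G2 : ℕ → (Fin L → V) → (Fin L → V) → Finset (Fin L) → ℝ)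
    (mask : V) (k : ℕ) (x w : Fin L → V) : ℝ :=
  ∑ z : Fin L → V, (∏ j, D x j (z j)) *
    ∑ S ∈ Finset.univ.filter (fun S : Finset (Fin L) => maskedWith mask z S = w),
      G2 (k + 1) z x S

/-- **P2 one-step transition probabilities.**  Let `G₂ = {G₂^k}` be a P2-style planner
(`G₂^k(z,x)` a probability distribution over `k`-element subsets of positions).  If
the state `x` after step `k` has exactly `k` unmasked coordinates, then for any `y`
with exactly `k+1` unmasked coordinates, the one-step transition probability from `x`
to `y` equals `(Π_{i ∈ C(y)} Cat(y^i; D^i(x))) · F^{k+1}(x, y)`. -/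
theorem p2_one_step_transition
    {V : Type*} [Fintype V] [DecidableEq V] {L : ℕ}
    (mask : V)
    (D : (Fin L → V) → Fin L → V → ℝ)
    (hD0 : ∀ x i y, 0 ≤ D x i y) (hD1 : ∀ x i, ∑ y, D x i y = 1)
    (G2 : ℕ → (Fin L → V) → (Fin L → V) → Finset (Fin L) → ℝ)
    (hG20 : ∀ k z x S, 0 ≤ G2 k z x S)
    (hG2card : ∀ k z x S, G2 k z x S ≠ 0 → S.card = k)
    (hG2sum : ∀ k z x, 1 ≤ k → k ≤ L → ∑ S : Finset (Fin L), G2 k z x S = 1)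
    (k : ℕ) (hk : k < L)
    (x : Fin L → V) (hx : (unmaskedSet mask x).card = k)
    (y : Fin L → V) (hy : (unmaskedSet mask y).card = k + 1) :
    p2Kernel D G2 mask k x y
      = (∏ i ∈ unmaskedSet mask y, D x i (y i)) * FP2 D G2 mask (k + 1) x y := by
  classical
  set C := unmaskedSet mask y with hCdef
  have hyC : ∀ i, i ∈ C ↔ y i ≠ mask := by
    intro i; simp [hCdef, unmaskedSet]
  set s : Fin L → Finset V := fun i => if i ∈ C then {y i} else Finset.univ with hs
  have hmem : ∀ z : Fin L → V, z ∈ Fintype.piFinset s ↔ ∀ i ∈ C, z i = y i := by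
    intro z
    simp only [Fintype.mem_piFinset, hs]
    constructor
    · intro h i hi; have := h i; rw [if_pos hi] at this; simpa using this
    · intro h i
      by_cases hi : i ∈ C
      · rw [if_pos hi]; simp [h i hi]
      · rw [if_neg hi]; simp
  -- LHS rewrite
  have hinner : ∀ z : Fin L → V,
      (∏ j, D x j (z j)) *
        (∑ S ∈ Finset.univ.filter (fun S : Finset (Fin L) => maskedWith mask z S = y),
          G2 (k + 1) z x S)
      = if z ∈ Fintype.piFinset s then (∏ j, D x j (z j)) * G2 (k + 1) z x C else 0 := by
    intro z
    have hsubC : ∀ S : Finset (Fin L), maskedWith mask z S = y → C ⊆ S := by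
      intro S hS i hi
      by_contra hiS
      have := congrFun hS i
      rw [maskedWith] at this
      simp only [if_neg hiS] at this
      exact (hyC i).mp hi this.symm
    have hagree : ∀ S : Finset (Fin L), maskedWith mask z S = y → ∀ i ∈ C, z i = y i := by
      intro S hS i hi
      have := congrFun hS i
      rw [maskedWith] at this
      rwa [if_pos (hsubC S hS hi)] at this
    by_cases hz : z ∈ Fintype.piFinset s
    · rw [if_pos hz]
      congr 1
      apply Finset.sum_eq_single_of_mem C
      · rw [Finset.mem_filter]
        refine ⟨Finset.mem_univ _, funext fun i => ?_⟩
        rw [maskedWith]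
        by_cases hi : i ∈ C
        · rw [if_pos hi]; exact (hmem z).mp hz i hi
        · rw [if_neg hi]
          have := (hyC i).not.mp hi
          push_neg at this
          exact this.symm
      · intro S hS hSne
        rw [Finset.mem_filter] at hS
        have hCS : C ⊆ S := hsubC S hS.2
        have hcard : k + 1 < S.card := by
          rw [← hy]
          exact Finset.card_lt_card (lt_of_le_of_ne hCS (fun h => hSne h.symm))
        by_contra hne
        have := hG2card (k + 1) z x S hne
        omega
    · rw [if_neg hz]
      have : (∑ S ∈ Finset.univ.filter (fun S : Finset (Fin L) => maskedWith mask z S = y),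
          G2 (k + 1) z x S) = 0 := by
        apply Finset.sum_eq_zero
        intro S hS
        rw [Finset.mem_filter] at hS
        exact absurd ((hmem z).mpr (hagree S hS.2)) hz
      rw [this, mul_zero]
  have hL : p2Kernel D G2 mask k x y
      = ∑ z ∈ Fintype.piFinset s, (∏ j, D x j (z j)) * G2 (k + 1) z x C := by
    rw [p2Kernel]
    rw [Finset.sum_congr rfl (fun z _ => hinner z)]
    rw [Finset.sum_ite_mem, Finset.univ_inter]
  -- RHS rewrite
  have hmaps : ∀ z : Fin L → V, z ∈ (Finset.univ : Finset (Fin L → V)) →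
      mergeOn mask z y ∈ Fintype.piFinset s := by
    intro z _
    rw [hmem]
    intro i hi
    simp [mergeOn, (hyC i).mp hi]
  have hR : FP2 D G2 mask (k + 1) x y
      = ∑ w ∈ Fintype.piFinset s,
          (∑ z ∈ Finset.univ.filter (fun z : Fin L → V => mergeOn mask z y = w),
            ∏ j, D x j (z j)) * G2 (k + 1) w x C := by
    rw [FP2, ← Finset.sum_fiberwise_of_maps_to hmaps]
    refine Finset.sum_congr rfl fun w hw => ?_
    rw [Finset.sum_mul]
    refine Finset.sum_congr rfl fun z hz => ?_
    rw [Finset.mem_filter] at hz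
    rw [hz.2, hCdef]
  -- fiber sums
  have hfiber : ∀ w ∈ Fintype.piFinset s,
      (∑ z ∈ Finset.univ.filter (fun z : Fin L → V => mergeOn mask z y = w),
        ∏ j, D x j (z j))
      = ∏ j, (if j ∈ C then (1 : ℝ) else D x j (w j)) := by
    intro w hw
    have hwC : ∀ i ∈ C, w i = y i := (hmem w).mp hw
    have hset : Finset.univ.filter (fun z : Fin L → V => mergeOn mask z y = w)
        = Fintype.piFinset (fun i => if i ∈ C then (Finset.univ : Finset V) else {w i}) := by
      ext z
      simp only [Finset.mem_filter, Finset.mem_univ, true_and, Fintype.mem_piFinset]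
      constructor
      · intro h i
        by_cases hi : i ∈ C
        · simp [hi]
        · rw [if_neg hi]
          have := congrFun h i
          rw [mergeOn] at this
          have hym : ¬ y i ≠ mask := (hyC i).not.mp hi
          rw [if_neg hym] at this
          simp [this]
      · intro h
        funext i
        rw [mergeOn]
        by_cases hi : i ∈ C
        · rw [if_pos ((hyC i).mp hi)]
          exact (hwC i hi).symm
        · have hym : ¬ y i ≠ mask := (hyC i).not.mp hi
          rw [if_neg hym]
          have := h i
          rw [if_neg hi] at this
          simpa using this
    rw [hset, ← Finset.prod_univ_sum]
    refine Finset.prod_congr rfl fun j _ => ?_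
    by_cases hj : j ∈ C
    · rw [if_pos hj, if_pos hj]; exact hD1 x j
    · rw [if_neg hj, if_neg hj]; exact Finset.sum_singleton _ _
  rw [hL, hR, Finset.mul_sum]
  refine Finset.sum_congr rfl fun w hw => ?_
  rw [hfiber w hw]
  have hwC : ∀ i ∈ C, w i = y i := (hmem w).mp hw
  rw [← mul_assoc]
  congr 1
  rw [← Finset.prod_mul_prod_compl C (fun j => if j ∈ C then (1:ℝ) else D x j (w j)),
      ← Finset.prod_mul_prod_compl C (fun j => D x j (w j))]
  have h1 : ∏ j ∈ C, (if j ∈ C then (1:ℝ) else D x j (w j)) = 1 :=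
    Finset.prod_eq_one fun j hj => if_pos hj
  have h2 : ∏ j ∈ Cᶜ, (if j ∈ C then (1:ℝ) else D x j (w j)) = ∏ j ∈ Cᶜ, D x j (w j) :=
    Finset.prod_congr rfl fun j hj => if_neg (Finset.mem_compl.mp hj)
  have h3 : ∏ i ∈ C, D x i (y i) = ∏ i ∈ C, D x i (w i) :=
    Finset.prod_congr rfl fun i hi => by rw [hwC i hi]
  rw [h1, h2, h3]
  ring
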